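/- Let Y ∈ ℕ^{n×m} and M ∈ ℝ^{n×m}. For each column index j, let P_j denote the set of supports of feasible j-th columns, i.e., sets of the form {i : i ≠ j, v_i > 0} where v ∈ ℝ^m satisfies v_i ≥ 0 for i ≠ j, the entries of v sum to zero, and Y·v equals the j-th column of M. Then the set of supports of Kirchhoff matrices A with Y·A = M equals the set of all unions ⋃_j {(i, j) : i ∈ S_j} over choices (S_1, …, S_m) ∈ P_1 × ⋯ × P_m, and in particular the number of distinct reaction graph structures of dynamically equivalent realizations equals the product over j of the cardinalities of the P_j. -/

import Mathlib

/-- A Kirchhoff matrix: nonnegative off-diagonal entries, zero column sums. -/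
def IsKirchhoff {m : ℕ} (A : Matrix (Fin m) (Fin m) ℝ) : Prop :=
  (∀ i j, i ≠ j → 0 ≤ A i j) ∧ ∀ j, ∑ i, A i j = 0

/-- The support (reaction graph structure) of a matrix: off-diagonal positive entries. -/
def kirchhoffSupport {m : ℕ} (A : Matrix (Fin m) (Fin m) ℝ) : Set (Fin m × Fin m) :=
  {p | p.1 ≠ p.2 ∧ 0 < A p.1 p.2}

/-- A linearly conjugate realization of (Y, M): D positive diagonal, A Kirchhoff, Y·A = D·M. -/
def IsLinConjReal {n m : ℕ} (Y : Matrix (Fin n) (Fin m) ℕ) (M : Matrix (Fin n) (Fin m) ℝ)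
    (D : Matrix (Fin n) (Fin n) ℝ) (A : Matrix (Fin m) (Fin m) ℝ) : Prop :=
  D.IsDiag ∧ (∀ i, 0 < D i i) ∧ IsKirchhoff A ∧
    (Y.map (Nat.cast : ℕ → ℝ)) * A = D * M

/-- The monomial map associated with Y. -/
def psi {n m : ℕ} (Y : Matrix (Fin n) (Fin m) ℕ) (x : Fin n → ℝ) : Fin m → ℝ :=
  fun j => ∏ i, x i ^ Y i j

/-- The set of supports of feasible j-th columns. -/
def colSupports {n m : ℕ} (Y : Matrix (Fin n) (Fin m) ℕ) (M : Matrix (Fin n) (Fin m) ℝ)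
    (j : Fin m) : Set (Set (Fin m)) :=
  {S | ∃ v : Fin m → ℝ, (∀ i, i ≠ j → 0 ≤ v i) ∧ (∑ i, v i = 0) ∧
    ((Y.map (Nat.cast : ℕ → ℝ)).mulVec v = fun i => M i j) ∧ S = {i | i ≠ j ∧ 0 < v i}}

lemma glue_injective {m : ℕ} :
    Function.Injective (fun S : Fin m → Set (Fin m) =>
      {p : Fin m × Fin m | p.1 ∈ S p.2}) := by
  intro S S' h
  funext j
  ext i
  have := Set.ext_iff.mp h (i, j)
  simpa using this

theorem dyneq_structures_product {n m : ℕ}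
    (Y : Matrix (Fin n) (Fin m) ℕ) (M : Matrix (Fin n) (Fin m) ℝ) :
    ({S | ∃ A : Matrix (Fin m) (Fin m) ℝ, IsKirchhoff A ∧
        (Y.map (Nat.cast : ℕ → ℝ)) * A = M ∧ kirchhoffSupport A = S} =
      {T | ∃ S : Fin m → Set (Fin m), (∀ j, S j ∈ colSupports Y M j) ∧
        T = {p : Fin m × Fin m | p.1 ∈ S p.2}}) ∧
    ({S | ∃ A : Matrix (Fin m) (Fin m) ℝ, IsKirchhoff A ∧
        (Y.map (Nat.cast : ℕ → ℝ)) * A = M ∧ kirchhoffSupport A = S}.ncard =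
      ∏ j, (colSupports Y M j).ncard) := by
  have heq : ({S | ∃ A : Matrix (Fin m) (Fin m) ℝ, IsKirchhoff A ∧
        (Y.map (Nat.cast : ℕ → ℝ)) * A = M ∧ kirchhoffSupport A = S} =
      {T | ∃ S : Fin m → Set (Fin m), (∀ j, S j ∈ colSupports Y M j) ∧
        T = {p : Fin m × Fin m | p.1 ∈ S p.2}}) := by
    ext T
    constructor
    · rintro ⟨A, ⟨hnn, hsum⟩, hYA, rfl⟩
      refine ⟨fun j => {i | i ≠ j ∧ 0 < A i j}, fun j => ?_, ?_⟩
      · exact ⟨fun i => A i j, fun i hij => hnn i j hij, hsum j,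
          funext fun i => by
            have := congrFun (congrFun hYA i) j
            simpa [Matrix.mulVec, Matrix.mul_apply, dotProduct] using this, rfl⟩
      · ext p; simp [kirchhoffSupport]
    · rintro ⟨S, hS, rfl⟩
      choose v hv0 hvsum hvY hvS using hS
      refine ⟨fun i j => v j i, ⟨fun i j hij => hv0 j i hij, hvsum⟩, ?_, ?_⟩
      · ext i j
        have := congrFun (hvY j) i
        refine (Matrix.mul_apply (M := Y.map (Nat.cast : ℕ → ℝ)) (N := fun i j => v j i)).trans ?_
        simpa [Matrix.mulVec, Matrix.mul_apply, dotProduct] using this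
      · ext p
        have := hvS p.2
        simp only [kirchhoffSupport, Set.mem_setOf_eq, this]
  refine ⟨heq, ?_⟩
  rw [heq]
  have himg : {T | ∃ S : Fin m → Set (Fin m), (∀ j, S j ∈ colSupports Y M j) ∧
        T = {p : Fin m × Fin m | p.1 ∈ S p.2}} =
      (fun S : Fin m → Set (Fin m) => {p : Fin m × Fin m | p.1 ∈ S p.2}) ''
        (Set.pi Set.univ (colSupports Y M)) := by
    ext T
    constructor
    · rintro ⟨S, h1, rfl⟩; exact ⟨S, fun j _ => h1 j, rfl⟩
    · rintro ⟨S, h1, rfl⟩; exact ⟨S, fun j => h1 j trivial, rfl⟩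
  rw [himg, Set.ncard_image_of_injective _ glue_injective,
    ← Nat.card_coe_set_eq, Nat.card_congr (Equiv.Set.univPi (colSupports Y M)),
    Nat.card_pi]
  exact Finset.prod_congr rfl fun j _ => Nat.card_coe_set_eq _
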